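/- Assume that there exists a strongly unbounded set A ⊆ ℕ^ℕ of cardinality non(SMZ). Then there exist a strongly null set X ⊆ ℝ and a continuous function F : X → ℝ such that the image F[X] is not strongly null. -/

import Mathlib

open Filter Set

/-- `f ≤* g`: `f n ≤ g n` for all but finitely many `n`. -/
def LeStar (f g : ℕ → ℕ) : Prop := ∀ᶠ n in Filter.atTop, f n ≤ g n

/-- A subset of Baire space is bounded if it has a `≤*`-upper bound. -/
def BddFam (B : Set (ℕ → ℕ)) : Prop := ∃ g : ℕ → ℕ, ∀ f ∈ B, LeStar f g

/-- A subset of Baire space is dominating if every function is `≤*` below some member. -/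
def DominatingFam (D : Set (ℕ → ℕ)) : Prop := ∀ g : ℕ → ℕ, ∃ f ∈ D, LeStar g f

/-- An open cover of a topological space. -/
def IsOpenCover {X : Type*} [TopologicalSpace X] (𝒰 : Set (Set X)) : Prop :=
  (∀ U ∈ 𝒰, IsOpen U) ∧ ⋃₀ 𝒰 = Set.univ

/-- The cover `𝒰` contains a finite subcover. -/
def HasFinSubcover {X : Type*} (𝒰 : Set (Set X)) : Prop :=
  ∃ ℱ ⊆ 𝒰, ℱ.Finite ∧ ⋃₀ ℱ = Set.univ

/-- The Hurewicz property `Ufin(O,Γ)`. -/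
def UfinOGamma (X : Type*) [TopologicalSpace X] : Prop :=
  ∀ 𝒰 : ℕ → Set (Set X),
    (∀ n, IsOpenCover (𝒰 n)) → (∀ n, ¬ HasFinSubcover (𝒰 n)) →
    ∃ ℱ : ℕ → Set (Set X),
      (∀ n, ℱ n ⊆ 𝒰 n ∧ (ℱ n).Finite) ∧
      ∀ x : X, ∀ᶠ n in Filter.atTop, x ∈ ⋃₀ ℱ n

/-- A set of reals is strongly null (has strong measure zero) if for every sequence of
positive reals `ε n` it can be covered by sets `I n` with `diam (I n) < ε n`. -/
def StronglyNull (X : Set ℝ) : Prop :=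
  ∀ ε : ℕ → ℝ, (∀ n, 0 < ε n) →
    ∃ I : ℕ → Set ℝ, (∀ n, EMetric.diam (I n) < ENNReal.ofReal (ε n)) ∧ X ⊆ ⋃ n, I n

/-- A subset of the Baire space is strongly unbounded if for each `f`, the set of its
members `≤*`-below `f` has cardinality strictly smaller than the whole set. -/
def StronglyUnbounded (A : Set (ℕ → ℕ)) : Prop :=
  ∀ f : ℕ → ℕ, Cardinal.mk {g : ℕ → ℕ // g ∈ A ∧ LeStar g f} < Cardinal.mk A

/-- `non(SMZ)`: the minimal cardinality of a set of reals that is not strongly null. -/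
noncomputable def nonSMZ : Cardinal :=
  sInf { c : Cardinal | ∃ X : Set ℝ, ¬ StronglyNull X ∧ Cardinal.mk X = c }

/- ======================= auxiliary development ======================= -/

namespace SMZAux

/-! ### Binary digits -/

noncomputable def bit (n : ℕ) (y : ℝ) : ℕ := (⌊y * 2 ^ (n+1)⌋ % 2).toNat

lemma bit_le_one (n : ℕ) (y : ℝ) : bit n y ≤ 1 := by
  have h := Int.emod_lt_of_pos (⌊y * 2 ^ (n+1)⌋) (show (0:ℤ) < 2 by norm_num)
  have h2 := Int.emod_nonneg (⌊y * 2 ^ (n+1)⌋) (show (2:ℤ) ≠ 0 by norm_num)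
  unfold bit; omega

lemma floor_two_mul (x : ℝ) : ⌊x * 2⌋ = 2 * ⌊x⌋ + ⌊x * 2⌋ % 2 := by
  have h1 : 2 * ⌊x⌋ ≤ ⌊x * 2⌋ := by
    rw [Int.le_floor]
    push_cast
    nlinarith [Int.floor_le x]
  have h2 : ⌊x * 2⌋ < 2 * ⌊x⌋ + 2 := by
    rw [Int.floor_lt]
    push_cast
    nlinarith [Int.lt_floor_add_one x]
  omega

lemma floor_eq_of_bits (y y' : ℝ) (hy0 : 0 ≤ y) (hy1 : y < 1) (hy0' : 0 ≤ y') (hy1' : y' < 1)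
    (n : ℕ) (h : ∀ i < n, bit i y = bit i y') : ⌊y * 2 ^ n⌋ = ⌊y' * 2 ^ n⌋ := by
  induction n with
  | zero =>
    simp only [pow_zero, mul_one]
    rw [Int.floor_eq_zero_iff.2 ⟨hy0, hy1⟩, Int.floor_eq_zero_iff.2 ⟨hy0', hy1'⟩]
  | succ n ih =>
    have e1 : y * 2 ^ (n+1) = y * 2 ^ n * 2 := by ring
    have e1' : y' * 2 ^ (n+1) = y' * 2 ^ n * 2 := by ring
    have ihh := ih (fun i hi => h i (Nat.lt_succ_of_lt hi))
    have hb := h n (Nat.lt_succ_self n)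
    unfold bit at hb
    have hmod : ⌊y * 2 ^ (n+1)⌋ % 2 = ⌊y' * 2 ^ (n+1)⌋ % 2 := by
      have m1 := Int.emod_nonneg (⌊y * 2 ^ (n+1)⌋) (show (2:ℤ) ≠ 0 by norm_num)
      have m2 := Int.emod_nonneg (⌊y' * 2 ^ (n+1)⌋) (show (2:ℤ) ≠ 0 by norm_num)
      omega
    rw [e1, e1', floor_two_mul (y * 2 ^ n), floor_two_mul (y' * 2 ^ n), ihh]
    rw [← e1, ← e1', hmod]

lemma abs_sub_lt_of_bits (y y' : ℝ) (hy0 : 0 ≤ y) (hy1 : y < 1) (hy0' : 0 ≤ y') (hy1' : y' < 1)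
    (n : ℕ) (h : ∀ i ≤ n, bit i y = bit i y') : |y - y'| < (2:ℝ)⁻¹ ^ (n+1) := by
  have hf := floor_eq_of_bits y y' hy0 hy1 hy0' hy1' (n+1) (fun i hi => h i (Nat.lt_succ_iff.1 hi))
  have b1 := Int.floor_le (y * 2 ^ (n+1))
  have b2 := Int.lt_floor_add_one (y * 2 ^ (n+1))
  have b3 := Int.floor_le (y' * 2 ^ (n+1))
  have b4 := Int.lt_floor_add_one (y' * 2 ^ (n+1))
  rw [hf] at b1 b2
  have hp : (0:ℝ) < 2 ^ (n+1) := by positivity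
  rw [abs_sub_lt_iff]
  have e : (2:ℝ)⁻¹ ^ (n+1) = ((2:ℝ) ^ (n+1))⁻¹ := by rw [inv_pow]
  rw [e, inv_eq_one_div]
  constructor <;> rw [lt_div_iff₀ hp] <;> nlinarith

lemma eq_of_bits (y y' : ℝ) (hy0 : 0 ≤ y) (hy1 : y < 1) (hy0' : 0 ≤ y') (hy1' : y' < 1)
    (h : ∀ i, bit i y = bit i y') : y = y' := by
  by_contra hne
  have hd : 0 < |y - y'| := abs_sub_pos.2 hne
  obtain ⟨n, hn⟩ := exists_pow_lt_of_lt_one hd (show (2:ℝ)⁻¹ < 1 by norm_num)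
  have := abs_sub_lt_of_bits y y' hy0 hy1 hy0' hy1' n (fun i _ => h i)
  have hmono : (2:ℝ)⁻¹ ^ (n+1) ≤ (2:ℝ)⁻¹ ^ n :=
    pow_le_pow_of_le_one (by norm_num) (by norm_num) (Nat.le_succ n)
  linarith

/-! ### Compression of `ℝ` into `[0,1)` -/

noncomputable def hcode (y : ℝ) : ℝ := 1/2 + Real.arctan y / Real.pi

lemma hcode_mem (y : ℝ) : 0 ≤ hcode y ∧ hcode y < 1 := by
  have h1 := Real.arctan_lt_pi_div_two y
  have h2 := Real.neg_pi_div_two_lt_arctan y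
  have hpi := Real.pi_pos
  constructor
  · unfold hcode
    have : -(1/2 : ℝ) < Real.arctan y / Real.pi := by
      rw [lt_div_iff₀ hpi]; nlinarith
    linarith
  · unfold hcode
    have : Real.arctan y / Real.pi < 1/2 := by
      rw [div_lt_iff₀ hpi]; nlinarith
    linarith

lemma hcode_strictMono : StrictMono hcode := by
  intro a b hab
  unfold hcode
  have h1 := Real.arctan_strictMono hab
  have hpi := Real.pi_pos
  have : Real.arctan a / Real.pi < Real.arctan b / Real.pi := by gcongr
  linarith

lemma strictMono_inv_cont {h : ℝ → ℝ} (hm : StrictMono h) (a : ℝ) {δ : ℝ} (hδ : 0 < δ) :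
    ∃ δ' > 0, ∀ b, |h b - h a| < δ' → |b - a| < δ := by
  refine ⟨min (h (a + δ) - h a) (h a - h (a - δ)), ?_, ?_⟩
  · apply lt_min <;> simp only [sub_pos] <;> apply hm <;> linarith
  · intro b hb
    rw [abs_sub_lt_iff] at hb
    obtain ⟨hb1, hb2⟩ := hb
    have h1 : h b - h a < h (a + δ) - h a := lt_of_lt_of_le hb1 (min_le_left _ _)
    have h2 : h a - h b < h a - h (a - δ) := lt_of_lt_of_le hb2 (min_le_right _ _)
    have hu : b < a + δ := hm.lt_iff_lt.1 (by linarith)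
    have hl : a - δ < b := hm.lt_iff_lt.1 (by linarith)
    rw [abs_sub_lt_iff]
    constructor <;> linarith

/-! ### Base-8 codes of digit sequences -/

noncomputable def rr : ℝ := 8⁻¹

lemma rr_pos : 0 < rr := by norm_num [rr]
lemma rr_lt_one : rr < 1 := by norm_num [rr]
lemma rr_nonneg : 0 ≤ rr := le_of_lt rr_pos

noncomputable def cd (d : ℕ → ℕ) : ℝ := ∑' p, (d p : ℝ) * rr ^ (p+1)

lemma summable_aux (c : ℝ) (M : ℕ) : Summable (fun p : ℕ => c * rr ^ (p + M)) := by
  have : Summable (fun p : ℕ => rr ^ p) := summable_geometric_of_lt_one rr_nonneg rr_lt_one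
  have h2 : Summable (fun p : ℕ => (c * rr ^ M) * rr ^ p) := this.mul_left _
  apply h2.congr
  intro p
  rw [pow_add]
  ring

lemma cd_summable {d : ℕ → ℕ} (hd : ∀ p, d p ≤ 6) :
    Summable (fun p => (d p : ℝ) * rr ^ (p+1)) := by
  apply Summable.of_nonneg_of_le
    (fun p => mul_nonneg (Nat.cast_nonneg _) (le_of_lt (pow_pos rr_pos _)))
    (fun p => ?_) (summable_aux 6 1)
  have h1 : (d p : ℝ) ≤ 6 := by exact_mod_cast hd p
  have h2 : (0:ℝ) < rr ^ (p+1) := pow_pos rr_pos _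
  nlinarith

lemma tsum_geo_bound (c : ℝ) (M : ℕ) :
    ∑' p : ℕ, c * rr ^ (p + M + 1) = (c / 7) * rr ^ M := by
  have h1 : ∀ p : ℕ, c * rr ^ (p + M + 1) = (c * rr ^ (M+1)) * rr ^ p := by
    intro p; rw [show p + M + 1 = (M+1) + p by ring, pow_add]; ring
  rw [tsum_congr h1, tsum_mul_left, tsum_geometric_of_lt_one rr_nonneg rr_lt_one, pow_succ]
  have : (1 - rr)⁻¹ = 8/7 := by norm_num [rr]
  rw [this, rr]
  ring_nf

lemma cd_diff_bound {d d' : ℕ → ℕ} (hd : ∀ p, 1 ≤ d p ∧ d p ≤ 6)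
    (hd' : ∀ p, 1 ≤ d' p ∧ d' p ≤ 6)
    (M : ℕ) (h : ∀ p < M, d p = d' p) : |cd d - cd d'| ≤ 5/7 * rr ^ M := by
  have s1 := cd_summable (fun p => (hd p).2)
  have s2 := cd_summable (fun p => (hd' p).2)
  have sg : Summable (fun p => ((d p : ℝ) * rr ^ (p+1) - (d' p : ℝ) * rr ^ (p+1))) := s1.sub s2
  have e1 : cd d - cd d' = ∑' p, ((d p : ℝ) * rr ^ (p+1) - (d' p : ℝ) * rr ^ (p+1)) :=
    (Summable.tsum_sub s1 s2).symm
  have sab : Summable (fun p => |(d p : ℝ) * rr ^ (p+1) - (d' p : ℝ) * rr ^ (p+1)|) := by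
    have := sg.norm
    simpa [Real.norm_eq_abs] using this
  have e2 : |∑' p, ((d p : ℝ) * rr ^ (p+1) - (d' p : ℝ) * rr ^ (p+1))|
      ≤ ∑' p, |(d p : ℝ) * rr ^ (p+1) - (d' p : ℝ) * rr ^ (p+1)| := by
    have := norm_tsum_le_tsum_norm
      (f := fun p => ((d p : ℝ) * rr ^ (p+1) - (d' p : ℝ) * rr ^ (p+1)))
      (by simpa [Real.norm_eq_abs] using sab)
    simpa [Real.norm_eq_abs] using this
  have e3 : ∑ p ∈ Finset.range M, |(d p : ℝ) * rr ^ (p+1) - (d' p : ℝ) * rr ^ (p+1)|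
      + ∑' p, |(d (p+M) : ℝ) * rr ^ (p+M+1) - (d' (p+M) : ℝ) * rr ^ (p+M+1)|
      = ∑' p, |(d p : ℝ) * rr ^ (p+1) - (d' p : ℝ) * rr ^ (p+1)| := by
    exact_mod_cast Summable.sum_add_tsum_nat_add M sab
  have e4 : ∑ p ∈ Finset.range M, |(d p : ℝ) * rr ^ (p+1) - (d' p : ℝ) * rr ^ (p+1)| = 0 := by
    apply Finset.sum_eq_zero
    intro p hp
    rw [h p (Finset.mem_range.1 hp)]
    simp
  have key : ∀ p : ℕ, |(d (p+M) : ℝ) * rr ^ (p+M+1) - (d' (p+M) : ℝ) * rr ^ (p+M+1)|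
      ≤ 5 * rr ^ (p+M+1) := by
    intro p
    have hb1 : (1:ℝ) ≤ (d (p+M) : ℝ) := by exact_mod_cast (hd (p+M)).1
    have hb2 : (d (p+M) : ℝ) ≤ 6 := by exact_mod_cast (hd (p+M)).2
    have hb3 : (1:ℝ) ≤ (d' (p+M) : ℝ) := by exact_mod_cast (hd' (p+M)).1
    have hb4 : (d' (p+M) : ℝ) ≤ 6 := by exact_mod_cast (hd' (p+M)).2
    have hpow : (0:ℝ) < rr ^ (p+M+1) := pow_pos rr_pos _
    rw [← sub_mul, abs_mul, abs_of_pos hpow]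
    have : |(d (p+M) : ℝ) - (d' (p+M) : ℝ)| ≤ 5 := by
      rw [abs_le]; constructor <;> linarith
    nlinarith
  have stail : Summable
      (fun p => |(d (p+M) : ℝ) * rr ^ (p+M+1) - (d' (p+M) : ℝ) * rr ^ (p+M+1)|) := by
    have := sab.comp_injective (add_left_injective M)
    exact this
  have e5 : ∑' p, |(d (p+M) : ℝ) * rr ^ (p+M+1) - (d' (p+M) : ℝ) * rr ^ (p+M+1)|
      ≤ ∑' p : ℕ, 5 * rr ^ (p + M + 1) := by
    apply Summable.tsum_le_tsum key stail
    apply (summable_aux 5 (M+1)).congr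
    intro p
    rw [show p + (M+1) = p + M + 1 by ring]
  have e6 := tsum_geo_bound 5 M
  calc |cd d - cd d'| = |∑' p, ((d p : ℝ) * rr ^ (p+1) - (d' p : ℝ) * rr ^ (p+1))| := by rw [e1]
    _ ≤ ∑' p, |(d p : ℝ) * rr ^ (p+1) - (d' p : ℝ) * rr ^ (p+1)| := e2
    _ = ∑' p, |(d (p+M) : ℝ) * rr ^ (p+M+1) - (d' (p+M) : ℝ) * rr ^ (p+M+1)| := by
        rw [← e3, e4, zero_add]
    _ ≤ ∑' p : ℕ, 5 * rr ^ (p + M + 1) := e5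
    _ = 5/7 * rr ^ M := e6

lemma cd_split {d : ℕ → ℕ} (hd : ∀ p, d p ≤ 6) (k : ℕ) :
    cd d = (∑ p ∈ Finset.range k, (d p : ℝ) * rr ^ (p+1)) + rr ^ k * cd (fun p => d (p+k)) := by
  have s1 := cd_summable hd
  have h1 := Summable.sum_add_tsum_nat_add (f := fun p => (d p : ℝ) * rr ^ (p+1)) k s1
  rw [cd, ← h1]
  congr 1
  rw [cd, ← tsum_mul_left]
  apply tsum_congr
  intro p
  rw [show p + k + 1 = (p+1) + k by ring, pow_add]
  ring

lemma cd_sep {d d' : ℕ → ℕ} (hd : ∀ p, 1 ≤ d p ∧ d p ≤ 6) (hd' : ∀ p, 1 ≤ d' p ∧ d' p ≤ 6)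
    (q : ℕ) (hne : d q ≠ d' q) (h : ∀ p < q, d p = d' p) :
    2/7 * rr ^ (q+1) ≤ |cd d - cd d'| := by
  have e1 := cd_split (fun p => (hd p).2) (q+1)
  have e2 := cd_split (fun p => (hd' p).2) (q+1)
  have hsum : (∑ p ∈ Finset.range (q+1), (d p : ℝ) * rr ^ (p+1))
      - (∑ p ∈ Finset.range (q+1), (d' p : ℝ) * rr ^ (p+1))
      = ((d q : ℝ) - (d' q : ℝ)) * rr ^ (q+1) := by
    rw [Finset.sum_range_succ, Finset.sum_range_succ,
      Finset.sum_congr rfl (fun p hp => by rw [h p (Finset.mem_range.1 hp)])]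
    ring
  have htail : |cd (fun p => d (p+(q+1))) - cd (fun p => d' (p+(q+1)))| ≤ 5/7 := by
    have := cd_diff_bound (d := fun p => d (p+(q+1))) (d' := fun p => d' (p+(q+1)))
      (fun p => hd _) (fun p => hd' _) 0 (by omega)
    simpa using this
  have hq : (1:ℝ) ≤ |(d q : ℝ) - (d' q : ℝ)| := by
    have : d q < d' q ∨ d' q < d q := Nat.lt_or_lt_of_ne hne
    rcases this with h1 | h1
    · rw [abs_sub_comm, le_abs]
      left
      have : (d q : ℝ) + 1 ≤ (d' q : ℝ) := by exact_mod_cast h1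
      linarith
    · rw [le_abs]
      left
      have : (d' q : ℝ) + 1 ≤ (d q : ℝ) := by exact_mod_cast h1
      linarith
  have hpow : (0:ℝ) < rr ^ (q+1) := pow_pos rr_pos _
  have key : cd d - cd d' = ((d q : ℝ) - (d' q : ℝ)) * rr ^ (q+1)
      + rr ^ (q+1) * (cd (fun p => d (p+(q+1))) - cd (fun p => d' (p+(q+1)))) := by
    rw [e1, e2, ← hsum]; ring
  rw [key]
  have h1 : |((d q : ℝ) - (d' q : ℝ)) * rr ^ (q+1)| ≥ rr ^ (q+1) := by
    rw [abs_mul, abs_of_pos hpow]; nlinarith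
  have h2 : |rr ^ (q+1) * (cd (fun p => d (p+(q+1))) - cd (fun p => d' (p+(q+1))))|
      ≤ 5/7 * rr ^ (q+1) := by
    rw [abs_mul, abs_of_pos hpow]; nlinarith
  calc 2/7 * rr ^ (q+1) ≤ |((d q : ℝ) - (d' q : ℝ)) * rr ^ (q+1)|
      - |rr ^ (q+1) * (cd (fun p => d (p+(q+1))) - cd (fun p => d' (p+(q+1))))| := by linarith
    _ ≤ _ := by
        have := abs_sub_abs_le_abs_sub (((d q : ℝ) - (d' q : ℝ)) * rr ^ (q+1))
          (-(rr ^ (q+1) * (cd (fun p => d (p+(q+1))) - cd (fun p => d' (p+(q+1))))))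
        simp only [abs_neg, sub_neg_eq_add] at this
        exact this

lemma cd_agree_of_close {d d' : ℕ → ℕ} (hd : ∀ p, 1 ≤ d p ∧ d p ≤ 6)
    (hd' : ∀ p, 1 ≤ d' p ∧ d' p ≤ 6) (M : ℕ)
    (hlt : |cd d - cd d'| < 2/7 * rr ^ (M+1)) : ∀ p ≤ M, d p = d' p := by
  by_contra hc
  push_neg at hc
  obtain ⟨p, hpM, hne⟩ := hc
  have hex : ∃ p, d p ≠ d' p := ⟨p, hne⟩
  have hqp : Nat.find hex ≤ p := Nat.find_min' hex hne
  have hqe : d (Nat.find hex) ≠ d' (Nat.find hex) := Nat.find_spec hex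
  have hagree : ∀ i < Nat.find hex, d i = d' i := fun i hi => by
    by_contra hcc
    exact (Nat.find_min hex hi) hcc
  have := cd_sep hd hd' (Nat.find hex) hqe hagree
  have hmono : rr ^ (M+1) ≤ rr ^ (Nat.find hex + 1) :=
    pow_le_pow_of_le_one rr_nonneg (le_of_lt rr_lt_one) (by omega)
  linarith

/-! ### Digit sequences coding a strictly increasing function and a real -/

open Classical in
noncomputable def dg (s : ℕ → ℕ) (y : ℝ) (p : ℕ) : ℕ :=
  if h : ∃ n, s n = p then 2 + bit h.choose y else 1

lemma dg_bounds (s : ℕ → ℕ) (y : ℝ) (p : ℕ) : 1 ≤ dg s y p ∧ dg s y p ≤ 6 := by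
  unfold dg
  split
  · next h => have := bit_le_one h.choose y; omega
  · omega

lemma dg_apply {s : ℕ → ℕ} (hs : Function.Injective s) (y : ℝ) (n : ℕ) :
    dg s y (s n) = 2 + bit n y := by
  unfold dg
  rw [dif_pos (⟨n, rfl⟩ : ∃ k, s k = s n)]
  congr 2
  exact hs (Exists.choose_spec (⟨n, rfl⟩ : ∃ k, s k = s n))

lemma dg_eq_one {s : ℕ → ℕ} {y : ℝ} {p : ℕ} (h : ¬ ∃ n, s n = p) : dg s y p = 1 := by
  unfold dg
  rw [dif_neg h]

lemma dg_ne_one_iff (s : ℕ → ℕ) (y : ℝ) (p : ℕ) : dg s y p ≠ 1 ↔ ∃ n, s n = p := by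
  constructor
  · intro h
    by_contra hc
    exact h (dg_eq_one hc)
  · intro h
    unfold dg
    rw [dif_pos h]
    omega

def Tf (f : ℕ → ℕ) (n : ℕ) : ℕ := (∑ i ∈ Finset.range (n+1), f i) + n + 1

lemma Tf_strictMono (f : ℕ → ℕ) : StrictMono (Tf f) := by
  apply strictMono_nat_of_lt_succ
  intro n
  unfold Tf
  rw [Finset.sum_range_succ f (n+1)]
  omega

lemma le_Tf (f : ℕ → ℕ) (n : ℕ) : f n ≤ Tf f n := by
  unfold Tf
  have : f n ≤ ∑ i ∈ Finset.range (n+1), f i :=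
    Finset.single_le_sum (fun i _ => Nat.zero_le (f i)) (Finset.self_mem_range_succ n)
  omega

lemma range_prefix_eq {s t : ℕ → ℕ} (hs : StrictMono s) (ht : StrictMono t) (M : ℕ)
    (h : ∀ p ≤ M, (∃ k, s k = p) ↔ (∃ k, t k = p)) :
    ∀ n, s n ≤ M → ∀ i ≤ n, s i = t i := by
  intro n hM i
  induction i using Nat.strong_induction_on with
  | _ i IH =>
    intro hin
    have hsiM : s i ≤ M := le_trans (hs.monotone hin) hM
    obtain ⟨k, hk⟩ := (h (s i) hsiM).mp ⟨i, rfl⟩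
    have hti_le : t i ≤ s i := by
      rcases lt_or_ge k i with hki | hki
      · exfalso
        have h1 : s k = t k := IH k hki (le_trans (le_of_lt hki) hin)
        have h2 : s k = s i := by rw [h1, hk]
        exact absurd (hs.injective h2) (Nat.ne_of_lt hki)
      · calc t i ≤ t k := ht.monotone hki
          _ = s i := hk
    obtain ⟨k', hk'⟩ := (h (t i) (le_trans hti_le hsiM)).mpr ⟨i, rfl⟩
    have hsi_le : s i ≤ t i := by
      rcases lt_or_ge k' i with hki | hki
      · exfalso
        have h1 : s k' = t k' := IH k' hki (le_trans (le_of_lt hki) hin)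
        have h2 : t k' = t i := by rw [← h1, hk']
        exact absurd (ht.injective h2) (Nat.ne_of_lt hki)
      · calc s i ≤ s k' := hs.monotone hki
          _ = t i := hk'
    omega

/-! ### Strong measure zero basics -/

lemma not_stronglyNull_univ : ¬ StronglyNull (Set.univ : Set ℝ) := by
  intro h
  obtain ⟨I, hI, hcov⟩ := h (fun n => (2:ℝ)⁻¹ ^ n) (fun n => by positivity)
  have hvol : ∀ n, MeasureTheory.volume (I n) ≤ ENNReal.ofReal ((2:ℝ)⁻¹ ^ n) := by
    intro n
    exact le_trans (Real.volume_le_diam (I n)) (le_of_lt (hI n))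
  have h1 : MeasureTheory.volume (⋃ n, I n) ≤ ∑' n, ENNReal.ofReal ((2:ℝ)⁻¹ ^ n) :=
    le_trans (MeasureTheory.measure_iUnion_le I) (ENNReal.tsum_le_tsum hvol)
  have h2 : ∑' n : ℕ, ENNReal.ofReal ((2:ℝ)⁻¹ ^ n) = ENNReal.ofReal 2 := by
    rw [← ENNReal.ofReal_tsum_of_nonneg (fun n => by positivity)
      (summable_geometric_of_lt_one (by norm_num) (by norm_num)), tsum_geometric_inv_two]
  have h3 : MeasureTheory.volume (⋃ n, I n) = ⊤ := by
    rw [← top_le_iff, ← Real.volume_univ]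
    exact MeasureTheory.measure_mono hcov
  rw [h3, h2] at h1
  exact absurd h1 (by simp [ENNReal.ofReal_lt_top.ne])

lemma exists_nonSMZ : ∃ Y : Set ℝ, ¬ StronglyNull Y ∧ Cardinal.mk Y = nonSMZ := by
  have hne : { c : Cardinal | ∃ X : Set ℝ, ¬ StronglyNull X ∧ Cardinal.mk X = c }.Nonempty :=
    ⟨Cardinal.mk (Set.univ : Set ℝ), Set.univ, not_stronglyNull_univ, rfl⟩
  have := csInf_mem hne
  obtain ⟨Y, hY, hYc⟩ := this
  exact ⟨Y, hY, hYc⟩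

lemma smz_of_mk_lt {Z : Set ℝ} (h : Cardinal.mk Z < nonSMZ) : StronglyNull Z := by
  by_contra hc
  have : nonSMZ ≤ Cardinal.mk Z := csInf_le ⟨0, fun c _ => Cardinal.zero_le c⟩ ⟨Z, hc, rfl⟩
  exact absurd h (not_lt_of_ge this)

/-! ### The coded set -/

section Coding

variable (A : Set (ℕ → ℕ)) (v : ↥A → ℝ)

noncomputable def dgf (f : ↥A) : ℕ → ℕ := dg (Tf f.1) (hcode (v f))

noncomputable def acode (f : ↥A) : ℝ := cd (dgf A v f)

lemma dgf_bounds (f : ↥A) (p : ℕ) : 1 ≤ dgf A v f p ∧ dgf A v f p ≤ 6 := dg_bounds _ _ _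

lemma acode_digits_eq {f f' : ↥A} (M : ℕ)
    (h : |acode A v f - acode A v f'| < 2/7 * rr ^ (M+1)) :
    ∀ p ≤ M, dgf A v f p = dgf A v f' p :=
  cd_agree_of_close (dgf_bounds A v f) (dgf_bounds A v f') M h

lemma digits_imply {f f' : ↥A} (n M : ℕ) (hM : Tf f.1 n ≤ M)
    (h : ∀ p ≤ M, dgf A v f p = dgf A v f' p) :
    ∀ i ≤ n, bit i (hcode (v f)) = bit i (hcode (v f')) := by
  have hiff : ∀ p ≤ M, (∃ k, Tf f.1 k = p) ↔ (∃ k, Tf f'.1 k = p) := by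
    intro p hp
    rw [← dg_ne_one_iff (Tf f.1) (hcode (v f)) p, ← dg_ne_one_iff (Tf f'.1) (hcode (v f')) p]
    show dgf A v f p ≠ 1 ↔ dgf A v f' p ≠ 1
    rw [h p hp]
  have hTeq : ∀ i ≤ n, Tf f.1 i = Tf f'.1 i :=
    range_prefix_eq (Tf_strictMono f.1) (Tf_strictMono f'.1) M hiff n hM
  intro i hi
  have hTi : Tf f.1 i ≤ M := le_trans ((Tf_strictMono f.1).monotone hi) hM
  have h1 : dgf A v f (Tf f.1 i) = 2 + bit i (hcode (v f)) :=
    dg_apply (Tf_strictMono f.1).injective _ i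
  have h2 : dgf A v f' (Tf f'.1 i) = 2 + bit i (hcode (v f')) :=
    dg_apply (Tf_strictMono f'.1).injective _ i
  have h3 := h (Tf f.1 i) hTi
  rw [h1] at h3
  rw [hTeq i hi, h2] at h3
  omega

lemma acode_close {f f' : ↥A} (n : ℕ)
    (h : |acode A v f - acode A v f'| < 2/7 * rr ^ (Tf f.1 n + 1)) :
    |hcode (v f) - hcode (v f')| < (2:ℝ)⁻¹ ^ (n+1) := by
  have hd := acode_digits_eq A v (Tf f.1 n) h
  have hb := digits_imply A v n (Tf f.1 n) le_rfl hd
  exact abs_sub_lt_of_bits _ _ (hcode_mem (v f)).1 (hcode_mem (v f)).2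
    (hcode_mem (v f')).1 (hcode_mem (v f')).2 n hb

lemma acode_v_eq {f f' : ↥A} (h : acode A v f = acode A v f') : v f = v f' := by
  have hbits : ∀ i, bit i (hcode (v f)) = bit i (hcode (v f')) := by
    intro i
    have hdist : |acode A v f - acode A v f'| < 2/7 * rr ^ (Tf f.1 i + 1) := by
      rw [h, sub_self, abs_zero]
      exact mul_pos (by norm_num) (pow_pos rr_pos _)
    exact digits_imply A v i (Tf f.1 i) le_rfl
      (acode_digits_eq A v (Tf f.1 i) hdist) i le_rfl
  have := eq_of_bits _ _ (hcode_mem (v f)).1 (hcode_mem (v f)).2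
    (hcode_mem (v f')).1 (hcode_mem (v f')).2 hbits
  exact hcode_strictMono.injective this

noncomputable def pickF (x : ↥(Set.range (acode A v))) : ↥A := x.2.choose

lemma pickF_spec (x : ↥(Set.range (acode A v))) : acode A v (pickF A v x) = x.1 :=
  x.2.choose_spec

noncomputable def FF (x : ↥(Set.range (acode A v))) : ℝ := v (pickF A v x)

lemma FF_cont : Continuous (FF A v) := by
  rw [Metric.continuous_iff]
  intro x ε' hε'
  obtain ⟨δ', hδ'pos, hδ'⟩ := strictMono_inv_cont hcode_strictMono (v (pickF A v x)) hε'
  obtain ⟨n, hn⟩ := exists_pow_lt_of_lt_one hδ'pos (show (2:ℝ)⁻¹ < 1 by norm_num)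
  refine ⟨2/7 * rr ^ (Tf (pickF A v x).1 n + 1),
    mul_pos (by norm_num) (pow_pos rr_pos _), ?_⟩
  intro x' hx'
  rw [Subtype.dist_eq, Real.dist_eq, ← pickF_spec A v x', ← pickF_spec A v x] at hx'
  have h1 : |acode A v (pickF A v x) - acode A v (pickF A v x')|
      < 2/7 * rr ^ (Tf (pickF A v x).1 n + 1) := by
    rw [abs_sub_comm]; exact hx'
  have h2 := acode_close A v n h1
  have h3 : |hcode (v (pickF A v x)) - hcode (v (pickF A v x'))| < δ' := by
    have hle : (2:ℝ)⁻¹ ^ (n+1) ≤ (2:ℝ)⁻¹ ^ n :=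
      pow_le_pow_of_le_one (by norm_num) (by norm_num) (Nat.le_succ n)
    linarith
  have h4 := hδ' (v (pickF A v x')) (by rw [abs_sub_comm]; exact h3)
  rw [Real.dist_eq]
  exact h4

lemma FF_range : Set.range (FF A v) = Set.range v := by
  ext y
  constructor
  · rintro ⟨x, rfl⟩
    exact ⟨pickF A v x, rfl⟩
  · rintro ⟨f, rfl⟩
    refine ⟨⟨acode A v f, ⟨f, rfl⟩⟩, ?_⟩
    show v (pickF A v ⟨acode A v f, ⟨f, rfl⟩⟩) = v f
    apply acode_v_eq A v
    exact pickF_spec A v ⟨acode A v f, ⟨f, rfl⟩⟩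

/-! ### Strong nullity of the coded set -/

/-- index type for the covering pieces -/
def EE : Type := Σ a : ℕ, (Fin a → Fin 8)

instance : Countable EE := by
  unfold EE
  infer_instance

/-- pieces of the cover: digit prefix `e.2` of length `e.1` followed by digit `1`
up to position `b e.1`. -/
def piece (b : ℕ → ℕ) (e : EE) : Set ℝ :=
  {x : ℝ | ∃ f : ↥A, x = acode A v f ∧ (∀ p : Fin e.1, dgf A v f p.1 = (e.2 p).1) ∧
    (∀ p, e.1 ≤ p → p < b e.1 → dgf A v f p = 1)}

lemma piece_bound (b : ℕ → ℕ) (hb : ∀ a, a < b a) (e : EE) (x x' : ℝ)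
    (hx : x ∈ piece A v b e) (hx' : x' ∈ piece A v b e) : |x - x'| ≤ 5/7 * rr ^ (b e.1) := by
  obtain ⟨f, rfl, hw, h1⟩ := hx
  obtain ⟨f', rfl, hw', h1'⟩ := hx'
  apply cd_diff_bound (dgf_bounds A v f) (dgf_bounds A v f')
  intro p hp
  rcases lt_or_ge p e.1 with hpa | hpa
  · rw [hw ⟨p, hpa⟩, hw' ⟨p, hpa⟩]
  · rw [h1 p hpa hp, h1' p hpa hp]

def iterU (b : ℕ → ℕ) : ℕ → ℕ
  | 0 => 0
  | (i+1) => b (iterU b i + 1)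

lemma iterU_strictMono (b : ℕ → ℕ) (hb : ∀ a, a < b a) : StrictMono (iterU b) := by
  apply strictMono_nat_of_lt_succ
  intro n
  have := hb (iterU b n + 1)
  show iterU b n < b (iterU b n + 1)
  omega

theorem acode_smz (hA : StronglyUnbounded A)
    (hsmall : ∀ Z : Set ℝ, Cardinal.mk Z < Cardinal.mk A → StronglyNull Z) :
    StronglyNull (Set.range (acode A v)) := by
  intro ε hε
  -- enumeration of pieces
  obtain ⟨ι, hι⟩ := Countable.exists_injective_nat EE
  -- thresholds
  have hN : ∀ e : EE, ∃ N : ℕ, rr ^ N < ε (2 * ι e) :=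
    fun e => exists_pow_lt_of_lt_one (hε (2 * ι e)) rr_lt_one
  -- bound function , depending only on the length
  set b : ℕ → ℕ := fun a =>
    a + 1 + (Finset.univ.sup (fun w : Fin a → Fin 8 => (hN ⟨a, w⟩).choose)) with hbdef
  have hb : ∀ a, a < b a := fun a => by simp [hbdef]; omega
  have hbe : ∀ (a : ℕ) (w : Fin a → Fin 8), rr ^ (b a) < ε (2 * ι ⟨a, w⟩) := by
    intro a w
    have h1 : (fun w : Fin a → Fin 8 => (hN ⟨a, w⟩).choose) w
        ≤ Finset.univ.sup (fun w : Fin a → Fin 8 => (hN ⟨a, w⟩).choose) :=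
      Finset.le_sup (f := fun w : Fin a → Fin 8 => (hN ⟨a, w⟩).choose) (Finset.mem_univ w)
    simp only at h1
    have hle : (hN ⟨a, w⟩).choose ≤ b a := by
      have hb2 : b a
          = a + 1 + Finset.univ.sup (fun w : Fin a → Fin 8 => (hN ⟨a, w⟩).choose) := rfl
      omega
    exact lt_of_le_of_lt
      (pow_le_pow_of_le_one rr_nonneg (le_of_lt rr_lt_one) hle) (hN ⟨a, w⟩).choose_spec
  -- the tower and the bound function for strong unboundedness
  set u : ℕ → ℕ := iterU b with hudef
  have hu : StrictMono u := iterU_strictMono b hb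
  set g : ℕ → ℕ := fun n => u (n+1) with hgdef
  -- the small part
  set Z : Set ℝ := {x | ∃ f : ↥A, LeStar f.1 g ∧ acode A v f = x} with hZdef
  have hZcard : Cardinal.mk Z < Cardinal.mk A := by
    have hsur : Function.Surjective
        (fun h : {g' : ℕ → ℕ // g' ∈ A ∧ LeStar g' g} =>
          (⟨acode A v ⟨h.1, h.2.1⟩, ⟨⟨h.1, h.2.1⟩, h.2.2, rfl⟩⟩ : ↥Z)) := by
      rintro ⟨x, f, hf, rfl⟩
      exact ⟨⟨f.1, f.2, hf⟩, rfl⟩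
    exact lt_of_le_of_lt (Cardinal.mk_le_of_surjective hsur) (hA g)
  have hZsmz := hsmall Z hZcard
  obtain ⟨J, hJd, hJc⟩ := hZsmz (fun n => ε (2*n+1)) (fun n => hε _)
  -- the even part
  set P : ℕ → Set ℝ := fun k => ⋃ (e : EE) (_ : ι e = k), piece A v b e with hPdef
  -- the cover
  refine ⟨fun m => if m % 2 = 0 then P (m / 2) else J (m / 2), ?_, ?_⟩
  · intro m
    by_cases hm : m % 2 = 0
    · simp only [hm, if_pos]
      rcases Classical.em (∃ e : EE, ι e = m / 2) with ⟨e, he⟩ | hno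
      · have hPe : P (m / 2) = piece A v b e := by
          apply Set.Subset.antisymm
          · intro x hx
            simp only [hPdef, Set.mem_iUnion] at hx
            obtain ⟨e', he', hx⟩ := hx
            rwa [hι (he'.trans he.symm)] at hx
          · intro x hx
            simp only [hPdef, Set.mem_iUnion]
            exact ⟨e, he, hx⟩
        rw [hPe]
        have hdle : EMetric.diam (piece A v b e) ≤ ENNReal.ofReal (5/7 * rr ^ (b e.1)) := by
          apply EMetric.diam_le
          intro x hx y hy
          rw [edist_dist, Real.dist_eq]
          exact ENNReal.ofReal_le_ofReal (piece_bound A v b hb e x y hx hy)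
        apply lt_of_le_of_lt hdle
        rw [ENNReal.ofReal_lt_ofReal_iff (hε m)]
        have h58 : 5/7 * rr ^ (b e.1) < rr ^ (b e.1) := by
          have := pow_pos rr_pos (b e.1)
          nlinarith
        have hm2 : 2 * ι e = m := by omega
        calc 5/7 * rr ^ (b e.1) < rr ^ (b e.1) := h58
          _ < ε (2 * ι ⟨e.1, e.2⟩) := hbe e.1 e.2
          _ = ε m := by rw [show (⟨e.1, e.2⟩ : EE) = e from rfl, hm2]
      · have : P (m / 2) = ∅ := by
          apply Set.eq_empty_iff_forall_notMem.2
          intro x hx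
          simp only [hPdef, Set.mem_iUnion] at hx
          obtain ⟨e, he, _⟩ := hx
          exact hno ⟨e, he⟩
        rw [this, show EMetric.diam (∅ : Set ℝ) = 0 from Metric.ediam_empty]
        exact ENNReal.ofReal_pos.2 (hε m)
    · simp only [hm, if_neg]
      have : m % 2 = 1 := by omega
      have h2 : 2 * (m / 2) + 1 = m := by omega
      calc EMetric.diam (J (m / 2)) < ENNReal.ofReal (ε (2 * (m / 2) + 1)) := hJd (m / 2)
        _ = ENNReal.ofReal (ε m) := by rw [h2]
  · rintro x ⟨f, rfl⟩
    by_cases hf : LeStar f.1 g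
    · have hxZ : acode A v f ∈ Z := ⟨f, hf, rfl⟩
      obtain ⟨_, ⟨n, rfl⟩, hn⟩ := hJc hxZ
      apply Set.mem_iUnion.2 ⟨2*n+1, ?_⟩
      have h1 : (2*n+1) % 2 = 1 := by omega
      have h2 : (2*n+1) / 2 = n := by omega
      simp only [h1, h2]
      norm_num
      exact hn
    · -- f escapes g at some n
      have hesc : ∃ n, g n < f.1 n := by
        rw [LeStar, Filter.not_eventually] at hf
        obtain ⟨n, hn⟩ := hf.exists
        exact ⟨n, by omega⟩
      obtain ⟨n, hn⟩ := hesc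
      have hTn : u (n+1) < Tf f.1 n := lt_of_lt_of_le hn (le_Tf f.1 n)
      -- pigeonhole : some window misses the range of Tf f
      have hgap : ∃ i, ∀ m', ¬(u i < Tf f.1 m' ∧ Tf f.1 m' < u (i+1)) := by
        by_contra hcon
        push_neg at hcon
        choose Mf hM1 hM2 using hcon
        have hMmono : StrictMono Mf := by
          intro i j hij
          have h1 : Tf f.1 (Mf i) < u (i+1) := hM2 i
          have h2 : u j < Tf f.1 (Mf j) := hM1 j
          have h3 : u (i+1) ≤ u j := hu.monotone hij
          exact (Tf_strictMono f.1).lt_iff_lt.1 (by omega)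
        have h4 : n ≤ Mf n := hMmono.le_apply
        have h5 : Tf f.1 (Mf n) < u (n+1) := hM2 n
        have h6 : Tf f.1 n ≤ Tf f.1 (Mf n) := (Tf_strictMono f.1).monotone h4
        omega
      obtain ⟨i, hi⟩ := hgap
      -- x lies in the piece of index ⟨u i + 1, digits⟩
      set a : ℕ := u i + 1 with hadef
      have hba : b a = u (i+1) := rfl
      have hgap1 : ∀ p, a ≤ p → p < b a → dgf A v f p = 1 := by
        intro p hpa hpb
        apply dg_eq_one
        rintro ⟨k, hk⟩
        exact hi k (by omega)
      have hdig8 : ∀ p, dgf A v f p < 8 := fun p => by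
        have := (dgf_bounds A v f p).2
        omega
      set w : Fin a → Fin 8 := fun p => ⟨dgf A v f p.1, hdig8 p.1⟩ with hwdef
      have hxp : acode A v f ∈ piece A v b ⟨a, w⟩ :=
        ⟨f, rfl, fun p => rfl, hgap1⟩
      apply Set.mem_iUnion.2 ⟨2 * ι ⟨a, w⟩, ?_⟩
      have h1 : (2 * ι ⟨a, w⟩) % 2 = 0 := by omega
      have h2 : (2 * ι ⟨a, w⟩) / 2 = ι ⟨a, w⟩ := by omega
      simp only [h1, h2, if_pos]
      exact Set.mem_iUnion.2 ⟨⟨a, w⟩, Set.mem_iUnion.2 ⟨rfl, hxp⟩⟩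

end Coding

end SMZAux
/-- If there is a strongly unbounded subset of the Baire space of cardinality `non(SMZ)`,
then strong measure zero is not preserved by continuous images: there are a strongly null
set of reals `X` and a continuous `F : X → ℝ` whose image is not strongly null. -/
theorem smz_not_preserved_by_continuous_images
    (A : Set (ℕ → ℕ)) (hA : StronglyUnbounded A) (hcard : Cardinal.mk A = nonSMZ) :
    ∃ X : Set ℝ, StronglyNull X ∧
      ∃ F : X → ℝ, Continuous F ∧ ¬ StronglyNull (Set.range F) := by
  classical
  obtain ⟨Y, hY, hYc⟩ := SMZAux.exists_nonSMZ
  obtain ⟨ψ⟩ : Nonempty (↥A ≃ ↥Y) := Cardinal.eq.mp (hcard.trans hYc.symm)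
  set v : ↥A → ℝ := fun f => (ψ f).1 with hvdef
  refine ⟨Set.range (SMZAux.acode A v), ?_, SMZAux.FF A v, SMZAux.FF_cont A v, ?_⟩
  · apply SMZAux.acode_smz A v hA
    intro Z hZ
    apply SMZAux.smz_of_mk_lt
    rwa [← hcard]
  · have hrange : Set.range (SMZAux.FF A v) = Y := by
      rw [SMZAux.FF_range A v]
      ext y
      constructor
      · rintro ⟨f, rfl⟩
        exact (ψ f).2
      · intro hy
        exact ⟨ψ.symm ⟨y, hy⟩, by simp [hvdef]⟩
    rw [hrange]
    exact hY
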